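/- Let f : ℝ^n → ℝ be differentiable, μ-strongly convex, and L-smooth with 0 ≤ μ < L. Then for all x, y: f(x) ≥ f(y) + ⟨∇f(y), x − y⟩ + (1/(2L))‖∇f(x) − ∇f(y)‖² + (μL/(2(L−μ)))‖x − y − (1/L)(∇f(x) − ∇f(y))‖². -/

import Mathlib

open scoped RealInnerProductSpace

section InterpAux
variable {E : Type*} [NormedAddCommGroup E] [InnerProductSpace ℝ E] [CompleteSpace E]

lemma line_hasDerivAt {g : E → ℝ} {g' : E → E} (hg : ∀ p, HasGradientAt g (g' p) p)
    (x v : E) (t : ℝ) :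
    HasDerivAt (fun s : ℝ => g (x + s • v)) ⟪g' (x + t • v), v⟫ t := by
  have h1 : HasDerivAt (fun s : ℝ => x + s • v) v t := by
    simpa using ((hasDerivAt_id t).smul_const v).const_add x
  have h2 := (hasGradientAt_iff_hasFDerivAt.mp (hg (x + t • v))).comp_hasDerivAt t h1
  simpa [InnerProductSpace.toDual_apply_apply, Function.comp_def] using h2

lemma first_order {g : E → ℝ} {g' : E → E} (hconv : ConvexOn ℝ Set.univ g)
    (hg : ∀ p, HasGradientAt g (g' p) p) (x z : E) :
    g x + ⟪g' x, z - x⟫ ≤ g z := by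
  have hd : HasDerivAt (fun s : ℝ => g (x + s • (z - x))) ⟪g' x, z - x⟫ 0 := by
    simpa using line_hasDerivAt hg x (z - x) 0
  have hh : ConvexOn ℝ Set.univ (fun s : ℝ => g (x + s • (z - x))) := by
    have h := hconv.comp_affineMap (AffineMap.lineMap x z : ℝ →ᵃ[ℝ] E)
    simp only [Set.preimage_univ] at h
    refine h.congr fun s _ => ?_
    simp [AffineMap.lineMap_apply, add_comm]
  have hs := hh.le_slope_of_hasDerivAt (Set.mem_univ (0:ℝ)) (Set.mem_univ 1) zero_lt_one hd
  simp [slope_def_field] at hs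
  linarith

lemma convex_of_monotone_grad {D : E → ℝ} {D' : E → E} (hD : ∀ p, HasGradientAt D (D' p) p)
    (hmono : ∀ p q, 0 ≤ ⟪D' p - D' q, p - q⟫) : ConvexOn ℝ Set.univ D := by
  refine ⟨convex_univ, fun x _ z _ a b ha hb hab => ?_⟩
  set h : ℝ → ℝ := fun s => D (x + s • (z - x)) with hhdef
  have hdiff : Differentiable ℝ h := fun t => (line_hasDerivAt hD x (z - x) t).differentiableAt
  have hderiv : ∀ t, deriv h t = ⟪D' (x + t • (z - x)), z - x⟫ :=
    fun t => (line_hasDerivAt hD x (z - x) t).deriv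
  have hmono' : Monotone (deriv h) := by
    intro s t hst
    rcases eq_or_lt_of_le hst with rfl | hlt
    · exact le_refl _
    rw [hderiv, hderiv]
    have key := hmono (x + t • (z - x)) (x + s • (z - x))
    have heq : (x + t • (z - x)) - (x + s • (z - x)) = (t - s) • (z - x) := by
      rw [sub_smul]; abel
    rw [heq, real_inner_smul_right, inner_sub_left] at key
    nlinarith [key, sub_pos.mpr hlt]
  have hconv : ConvexOn ℝ Set.univ h := hmono'.convexOn_univ_of_deriv hdiff
  have h2 := hconv.2 (Set.mem_univ (0:ℝ)) (Set.mem_univ (1:ℝ)) ha hb hab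
  simp only [smul_eq_mul, mul_zero, mul_one, zero_add] at h2
  have hcombo : a • x + b • z = x + b • (z - x) := by
    rw [Convex.combo_eq_smul_sub_add hab]; abel
  calc D (a • x + b • z) = h b := by rw [hcombo]
    _ ≤ a * h 0 + b * h 1 := h2
    _ = a * D x + b * D z := by simp [hhdef]

lemma hasGradientAt_normsq_half (c : ℝ) (x : E) :
    HasGradientAt (fun z : E => c / 2 * ‖z‖ ^ 2) (c • x) x := by
  rw [hasGradientAt_iff_hasFDerivAt]
  have h := (hasFDerivAt_id x).norm_sq.const_mul (c / 2)
  simp only [id] at h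
  refine h.congr_fderiv ?_
  ext v
  simp [InnerProductSpace.toDual_apply_apply, real_inner_smul_left, two_smul]
  ring

lemma HasGradientAt.sub'' {g h : E → ℝ} {a b x : E}
    (hg : HasGradientAt g a x) (hh : HasGradientAt h b x) :
    HasGradientAt (fun z => g z - h z) (a - b) x := by
  rw [hasGradientAt_iff_hasFDerivAt] at *
  rw [map_sub]
  exact hg.sub hh

lemma HasGradientAt.add'' {g h : E → ℝ} {a b x : E}
    (hg : HasGradientAt g a x) (hh : HasGradientAt h b x) :
    HasGradientAt (fun z => g z + h z) (a + b) x := by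
  rw [hasGradientAt_iff_hasFDerivAt] at *
  rw [map_add]
  exact hg.add hh

lemma hasGradientAt_inner_const (v x : E) :
    HasGradientAt (fun z : E => ⟪v, z⟫) v x := by
  rw [hasGradientAt_iff_hasFDerivAt]
  exact (InnerProductSpace.toDual ℝ E v).hasFDerivAt

lemma cocoercivity_value {g : E → ℝ} {g' : E → E} {c : ℝ} (hc : 0 < c)
    (hconv : ConvexOn ℝ Set.univ g) (hg : ∀ p, HasGradientAt g (g' p) p)
    (hsm : ConvexOn ℝ Set.univ (fun z => c / 2 * ‖z‖ ^ 2 - g z))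
    (x y : E) :
    g y + ⟪g' y, x - y⟫ + 1 / (2 * c) * ‖g' x - g' y‖ ^ 2 ≤ g x := by
  have hc' : c ≠ 0 := ne_of_gt hc
  set ψ : E → ℝ := fun z => (c / 2 * ‖z‖ ^ 2 - g z) + ⟪g' y, z⟫ with hψdef
  have hψgrad : ∀ p, HasGradientAt ψ ((c • p - g' p) + g' y) p := fun p =>
    (((hasGradientAt_normsq_half c p).sub'' (hg p)).add'' (hasGradientAt_inner_const (g' y) p))
  have hψconv : ConvexOn ℝ Set.univ ψ :=
    hsm.add ((InnerProductSpace.toDual ℝ E (g' y)).toLinearMap.convexOn convex_univ)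
  set u : E := g' x - g' y with hu
  set w : E := x - (1 / c) • u with hwdef
  have h1 := first_order hconv hg y w
  have h2 := first_order hψconv hψgrad x w
  have hwx : w - x = -((1 / c) • u) := by rw [hwdef]; abel
  have e1 : (⟪(c • x - g' x) + g' y, w - x⟫ : ℝ) = -⟪x, u⟫ + (1 / c) * ‖u‖ ^ 2 := by
    rw [hwx]
    rw [inner_neg_right, real_inner_smul_right]
    rw [inner_add_left, inner_sub_left, real_inner_smul_left]
    have : (⟪g' x, u⟫ : ℝ) - ⟪g' y, u⟫ = ‖u‖ ^ 2 := by
      rw [← inner_sub_left, ← hu, real_inner_self_eq_norm_sq]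
    field_simp
    linarith [this]
  have e2 : ‖w‖ ^ 2 = ‖x‖ ^ 2 - 2 * ((1 / c) * ⟪x, u⟫) + (1 / c) ^ 2 * ‖u‖ ^ 2 := by
    rw [hwdef, norm_sub_sq_real, real_inner_smul_right, norm_smul]
    rw [mul_pow, Real.norm_eq_abs, sq_abs]
  have e3 : (⟪g' y, w⟫ : ℝ) = ⟪g' y, x⟫ - (1 / c) * ⟪g' y, u⟫ := by
    rw [hwdef, inner_sub_right, real_inner_smul_right]
  have e4 : (⟪g' y, w - y⟫ : ℝ) = ⟪g' y, x - y⟫ - (1 / c) * ⟪g' y, u⟫ := by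
    rw [hwdef, inner_sub_right, inner_sub_right, inner_sub_right, real_inner_smul_right]; ring
  simp only [hψdef] at h2
  rw [e1, e2, e3] at h2
  rw [e4] at h1
  have k1 : c * ((1/c) * ⟪x, u⟫) = ⟪x, u⟫ := by field_simp
  have k2 : c * ((1/c) ^ 2 * ‖u‖ ^ 2) = (1/c) * ‖u‖ ^ 2 := by field_simp
  have k3 : (1 / (2 * c)) * ‖u‖ ^ 2 = (1/2) * ((1/c) * ‖u‖^2) := by ring
  rw [hu] at k3 ⊢
  rw [k3]
  nlinarith [h1, h2, k1, k2]

end InterpAux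

/-- Interpolation inequality for `μ`-strongly convex, `L`-smooth functions (function-value form). -/
theorem strongly_convex_smooth_interp_value
    {E : Type*} [NormedAddCommGroup E] [InnerProductSpace ℝ E] [FiniteDimensional ℝ E]
    (f : E → ℝ) (f' : E → E) (μ L : ℝ) (hμ : 0 ≤ μ) (hμL : μ < L)
    (hdiff : ∀ x, HasGradientAt f (f' x) x)
    (hsc : ConvexOn ℝ Set.univ (fun z => f z - μ / 2 * ‖z‖ ^ 2))
    (hlip : ∀ x y, ‖f' x - f' y‖ ≤ L * ‖x - y‖) :
    ∀ x y : E, f x ≥ f y + ⟪f' y, x - y⟫ + (1 / (2 * L)) * ‖f' x - f' y‖ ^ 2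
      + (μ * L / (2 * (L - μ))) * ‖x - y - (1 / L) • (f' x - f' y)‖ ^ 2 := by
  intro x y
  have hL : 0 < L := lt_of_le_of_lt hμ hμL
  have hcpos : 0 < L - μ := sub_pos.mpr hμL
  have hL' : L ≠ 0 := ne_of_gt hL
  have hc' : L - μ ≠ 0 := ne_of_gt hcpos
  set g : E → ℝ := fun z => f z - μ / 2 * ‖z‖ ^ 2 with hgdef
  set g' : E → E := fun z => f' z - μ • z with hg'def
  have hggrad : ∀ p, HasGradientAt g (g' p) p := fun p =>
    (hdiff p).sub'' (hasGradientAt_normsq_half μ p)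
  have hsm : ConvexOn ℝ Set.univ (fun z => (L - μ) / 2 * ‖z‖ ^ 2 - g z) := by
    refine convex_of_monotone_grad (D' := fun p => (L - μ) • p - g' p)
      (fun p => (hasGradientAt_normsq_half (L - μ) p).sub'' (hggrad p)) ?_
    intro p q
    have heq : ((L - μ) • p - g' p) - ((L - μ) • q - g' q) = L • (p - q) - (f' p - f' q) := by
      simp only [hg'def]
      module
    rw [heq, inner_sub_left, real_inner_smul_left, real_inner_self_eq_norm_sq]
    have h1 := real_inner_le_norm (f' p - f' q) (p - q)
    have h2 := hlip p q
    nlinarith [norm_nonneg (p - q), norm_nonneg (f' p - f' q)]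
  have key := cocoercivity_value hcpos hsc hggrad hsm x y
  set u : E := f' x - f' y with hudef
  set w0 : E := x - y with hw0def
  have hgu : g' x - g' y = u - μ • w0 := by
    simp only [hg'def, hudef, hw0def]
    module
  have F1 : ‖g' x - g' y‖ ^ 2 = ‖u‖ ^ 2 - 2 * (μ * ⟪u, w0⟫) + μ ^ 2 * ‖w0‖ ^ 2 := by
    rw [hgu, norm_sub_sq_real, real_inner_smul_right, norm_smul, mul_pow,
      Real.norm_eq_abs, sq_abs]
  have F2 : ‖w0 - (1 / L) • u‖ ^ 2
      = ‖w0‖ ^ 2 - 2 * ((1 / L) * ⟪u, w0⟫) + (1 / L) ^ 2 * ‖u‖ ^ 2 := by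
    rw [norm_sub_sq_real, real_inner_smul_right, real_inner_comm w0 u, norm_smul, mul_pow,
      Real.norm_eq_abs, sq_abs]
  have F3 : ‖x‖ ^ 2 = ‖y‖ ^ 2 + 2 * ⟪y, w0⟫ + ‖w0‖ ^ 2 := by
    have hx : x = y + w0 := by rw [hw0def]; abel
    rw [hx, norm_add_sq_real]
  have e5 : (⟪g' y, x - y⟫ : ℝ) = ⟪f' y, x - y⟫ - μ * ⟪y, w0⟫ := by
    rw [hg'def]
    rw [inner_sub_left, real_inner_smul_left, hw0def]
  simp only [hgdef] at key
  rw [F1, e5, F3] at key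
  rw [ge_iff_le, F2]
  have id1 : ∀ A B C : ℝ, 1 / (2 * L) * A
        + μ * L / (2 * (L - μ)) * (B - 2 * ((1 / L) * C) + (1 / L) ^ 2 * A)
      = μ / 2 * B + 1 / (2 * (L - μ)) * (A - 2 * (μ * C) + μ ^ 2 * B) := by
    intro A B C
    field_simp
    ring
  have := id1 (‖u‖ ^ 2) (‖w0‖ ^ 2) ⟪u, w0⟫
  linarith [key, this]
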